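/- There exists an absolute constant A₁ > 0 such that for every injective map τ : D → D, the scalar rearrangement operator on dyadic H¹ satisfies ‖T_{τ,1}‖₁² ≤ A₁ · C₁. -/

import Mathlib

open MeasureTheory Set
open scoped ENNReal NNReal Classical

noncomputable section

/-- A dyadic subinterval of `[0,1)`: the half-open interval
`[k/2^n, (k+1)/2^n)` with `k < 2^n`. -/
structure DyadicI where
  n : ℕ
  k : ℕ
  hk : k < 2 ^ n

instance : Nonempty DyadicI := ⟨⟨0, 0, by norm_num⟩⟩

namespace DyadicI

/-- The length `|I| = 2^{-n}` of a dyadic interval. -/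
def len (I : DyadicI) : ℝ := (2 : ℝ) ^ (-(I.n : ℤ))

/-- The left endpoint `k 2^{-n}` of a dyadic interval. -/
def lep (I : DyadicI) : ℝ := (I.k : ℝ) * I.len

/-- The underlying point set `[k/2^n, (k+1)/2^n)` of a dyadic interval. -/
def toSet (I : DyadicI) : Set ℝ := Set.Ico I.lep (I.lep + I.len)

/-- The `L^∞`-normalized Haar function `h_I`: `1` on the left half of `I`,
`-1` on the right half of `I`, `0` off `I`. -/
def haar (I : DyadicI) (t : ℝ) : ℝ :=
  if t ∈ Set.Ico I.lep (I.lep + I.len / 2) then 1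
  else if t ∈ Set.Ico (I.lep + I.len / 2) (I.lep + I.len) then -1
  else 0

end DyadicI

open DyadicI

section Defs

variable {X : Type*} [NormedAddCommGroup X] [NormedSpace ℝ X]

/-- The square function `𝕊(f)` of the `X`-valued Haar expansion `f = ∑_{I ∈ s} x_I h_I`:
`𝕊(f)(t) = (E_ε ‖∑_I ε_I x_I h_I(t)‖²)^{1/2}`, the average being taken over all
choices of signs `ε_I ∈ {±1}`, `I ∈ s`. -/
def sqFn (s : Finset DyadicI) (x : DyadicI → X) (t : ℝ) : ℝ :=
  Real.sqrt ((∑ ε : {I // I ∈ s} → Bool,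
    ‖∑ I ∈ s.attach, ((if ε I then (1 : ℝ) else -1) * haar I.1 t) • x I.1‖ ^ 2) /
      2 ^ s.card)

/-- The `H^p_X` (quasi-)norm of `f = ∑_{I ∈ s} x_I h_I`:
`‖f‖ = (∫₀¹ 𝕊(f)(t)^p dt)^{1/p}`. -/
def HpNormV (p : ℝ) (s : Finset DyadicI) (x : DyadicI → X) : ℝ :=
  (∫ t in Set.Icc (0 : ℝ) 1, sqFn s x t ^ p) ^ (1 / p)

/-- The coefficients of `(T_{τ,p} ⊗ Id_X)(f)` for `f = ∑_{I ∈ s} x_I h_I`, namely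
`(T_{τ,p} ⊗ Id_X)(f) = ∑_{I ∈ s} (|I|/|τ(I)|)^{1/p} x_I h_{τ(I)}`, as a family of
coefficients indexed by the Haar support `τ(s)`. -/
def rearrCoef (τ : DyadicI → DyadicI) (p : ℝ) (s : Finset DyadicI) (x : DyadicI → X) :
    DyadicI → X :=
  fun J => ∑ I ∈ s, if τ I = J then ((len I / len (τ I)) ^ (1 / p)) • x I else 0

/-- The scalar dyadic square function `S(f) = (∑_I a_I² 1_I)^{1/2}`
of `f = ∑_{I ∈ s} a_I h_I`. -/
def sqFnS (s : Finset DyadicI) (a : DyadicI → ℝ) (t : ℝ) : ℝ :=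
  Real.sqrt (∑ I ∈ s, a I ^ 2 * Set.indicator (toSet I) (fun _ => (1 : ℝ)) t)

/-- The scalar dyadic `H^p` (quasi-)norm `‖f‖_{H^p} = ‖S(f)‖_{L^p[0,1]}`. -/
def HpNormS (p : ℝ) (s : Finset DyadicI) (a : DyadicI → ℝ) : ℝ :=
  (∫ t in Set.Icc (0 : ℝ) 1, sqFnS s a t ^ p) ^ (1 / p)

/-- The coefficients of the scalar rearrangement operator `T_{τ,p}` applied to
`f = ∑_{I ∈ s} a_I h_I`; `T_{τ,p}` is determined by
`T_{τ,p}(h_I/|I|^{1/p}) = h_{τ(I)}/|τ(I)|^{1/p}`. -/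
def rearrCoefS (τ : DyadicI → DyadicI) (p : ℝ) (s : Finset DyadicI) (a : DyadicI → ℝ) :
    DyadicI → ℝ :=
  fun J => ∑ I ∈ s, if τ I = J then ((len I / len (τ I)) ^ (1 / p)) * a I else 0

/-- The operator norm `‖T_{τ,p} ⊗ Id_X : H^p_X → H^p_X‖ ∈ [0,∞]`, computed as the
supremum over finitely supported `f` in the unit ball of `H^p_X`. -/
def hpOpNorm (τ : DyadicI → DyadicI) (p : ℝ) (X : Type*) [NormedAddCommGroup X]
    [NormedSpace ℝ X] : ℝ≥0∞ :=
  ⨆ (s : Finset DyadicI) (x : DyadicI → X) (_ : HpNormV p s x ≤ 1),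
    ENNReal.ofReal (HpNormV p (s.image τ) (rearrCoef τ p s x))

/-- The scalar operator norm `‖T_{τ,p} : H^p → H^p‖ ∈ [0,∞]`. -/
def hpOpNormS (τ : DyadicI → DyadicI) (p : ℝ) : ℝ≥0∞ :=
  ⨆ (s : Finset DyadicI) (a : DyadicI → ℝ) (_ : HpNormS p s a ≤ 1),
    ENNReal.ofReal (HpNormS p (s.image τ) (rearrCoefS τ p s a))

/-- For `H = τ(L)` (so that `σ(J) = I` for `J = τ(I)`, `I ∈ L`), the maximal function
`μ_H(t) = sup_{J ∈ H} (|σ(J)|/|J|) 1_J(t) = sup_{I ∈ L} (|I|/|τ(I)|) 1_{τ(I)}(t)`,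
as an `[0,∞]`-valued function. -/
def muSet (τ : DyadicI → DyadicI) (L : Set DyadicI) (t : ℝ) : ℝ≥0∞ :=
  ⨆ (I : DyadicI) (_ : I ∈ L),
    ENNReal.ofReal (len I / len (τ I) * Set.indicator (toSet (τ I)) (fun _ => (1 : ℝ)) t)

/-- For `H = τ(L)` with `L` finite, the (real-valued) maximal function
`μ_H(t) = max_{I ∈ L} (|I|/|τ(I)|) 1_{τ(I)}(t)`. -/
def muFin (τ : DyadicI → DyadicI) (L : Finset DyadicI) (t : ℝ) : ℝ :=
  ((L.sup fun I =>
    Real.toNNReal (len I / len (τ I) * Set.indicator (toSet (τ I)) (fun _ => (1 : ℝ)) t) : ℝ≥0) : ℝ)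

/-- The point set `L* = ⋃_{I ∈ L} I` covered by a collection of dyadic intervals. -/
def pointSet (L : Set DyadicI) : Set ℝ := ⋃ I ∈ L, toSet I

/-- The constant `C₁ = sup_{H ⊆ τ(D), H ≠ ∅} (1/|σ(H)*|) ∫₀¹ μ_H(t) dt`, where
nonempty collections `H ⊆ τ(D)` are parametrized as `H = τ(L)` for nonempty `L ⊆ D`,
so that `σ(H)* = L*`. -/
def Cone (τ : DyadicI → DyadicI) : ℝ≥0∞ :=
  ⨆ (L : Set DyadicI) (_ : L.Nonempty),
    (∫⁻ t in Set.Icc (0 : ℝ) 1, muSet τ L t) / volume (pointSet L)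

/-- The square of the dyadic BMO norm of `g = ∑_{J ∈ s} a_J h_J`:
`‖g‖_{BMO}² = sup_{I ∈ D} (1/|I|) ∑_{J ⊆ I} a_J² |J|`. -/
def bmoSq (s : Finset DyadicI) (a : DyadicI → ℝ) : ℝ≥0∞ :=
  ⨆ I : DyadicI, ENNReal.ofReal
    ((∑ J ∈ s.filter fun J => toSet J ⊆ toSet I, a J ^ 2 * len J) / len I)

/-- The coefficients of `S_σ(g)` for `g = ∑_{J ∈ s} a_J h_J`, where `σ = τ⁻¹` on `τ(D)`:
`S_σ(h_J) = h_{σ(J)}` for `J ∈ τ(D)` and `S_σ(h_J) = 0` otherwise, so that the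
coefficient of `h_K` in `S_σ(g)` is `a_{τ(K)}` if `τ(K) ∈ s`, and `0` otherwise. -/
def sSigmaCoef (τ : DyadicI → DyadicI) (s : Finset DyadicI) (a : DyadicI → ℝ) :
    DyadicI → ℝ :=
  fun K => if τ K ∈ s then a (τ K) else 0

/-- The Haar support of `S_σ(g)` for `g` with Haar support `s`:
`σ(s ∩ τ(D))`, i.e. the preimage under `τ` of `s`. -/
def sSigmaSupp (τ : DyadicI → DyadicI) (s : Finset DyadicI) : Finset DyadicI :=
  (s.filter fun J => J ∈ Set.range τ).image (Function.invFun τ)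

/-- The operator norm `‖S_σ‖_{BMO} ∈ [0,∞]` of `S_σ` with respect to the dyadic BMO
norm, computed over finitely supported Haar expansions. -/
def bmoOpNorm (τ : DyadicI → DyadicI) : ℝ≥0∞ :=
  ⨆ (s : Finset DyadicI) (a : DyadicI → ℝ) (_ : bmoSq s a ≤ 1),
    (bmoSq (sSigmaSupp τ s) (sSigmaCoef τ s a)) ^ (1 / 2 : ℝ)

/-- The Carleson constant `⟦C⟧ = sup_{I ∈ C} (1/|I|) ∑_{J ∈ C, J ⊆ I} |J| ∈ [0,∞]`
of a collection of dyadic intervals. -/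
def carleson (C : Set DyadicI) : ℝ≥0∞ :=
  ⨆ (I : DyadicI) (_ : I ∈ C),
    (∑' J : {J : DyadicI // J ∈ C ∧ toSet J ⊆ toSet I}, ENNReal.ofReal (len J.1)) /
      ENNReal.ofReal (len I)

/-- The `L^p_X = L^p([0,1]; X)` (Bochner) norm of `f = ∑_{I ∈ s} x_I h_I`. -/
def LpNormV (p : ℝ) (s : Finset DyadicI) (x : DyadicI → X) : ℝ :=
  (∫ t in Set.Icc (0 : ℝ) 1, ‖∑ I ∈ s, haar I t • x I‖ ^ p) ^ (1 / p)

/-- The operator norm `‖T_{τ,p} ⊗ Id_X : L^p_X → L^p_X‖ ∈ [0,∞]`, computed over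
finitely supported Haar expansions. -/
def lpOpNorm (τ : DyadicI → DyadicI) (p : ℝ) (X : Type*) [NormedAddCommGroup X]
    [NormedSpace ℝ X] : ℝ≥0∞ :=
  ⨆ (s : Finset DyadicI) (x : DyadicI → X) (_ : LpNormV p s x ≤ 1),
    ENNReal.ofReal (LpNormV p (s.image τ) (rearrCoef τ p s x))

/-- The operator norm `‖T_{τ,p}^{-1} ⊗ Id_X‖ ∈ [0,∞]` on the span of
`{h_J : J ∈ τ(D)}` with the `L^p_X` norm: the map determined by
`x h_{τ(I)}/|τ(I)|^{1/p} ↦ x h_I/|I|^{1/p}`, i.e. sending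
`g = ∑_{I ∈ L} x_I h_{τ(I)}` to `∑_{I ∈ L} (|τ(I)|/|I|)^{1/p} x_I h_I`. -/
def lpInvOpNorm (τ : DyadicI → DyadicI) (p : ℝ) (X : Type*) [NormedAddCommGroup X]
    [NormedSpace ℝ X] : ℝ≥0∞ :=
  ⨆ (L : Finset DyadicI) (x : DyadicI → X)
    (_ : LpNormV p (L.image τ) (fun J => ∑ I ∈ L, if τ I = J then x I else 0) ≤ 1),
    ENNReal.ofReal (LpNormV p L fun I => ((len (τ I) / len I) ^ (1 / p)) • x I)

/-- The operator norm `‖T_{τ,1}^{-1}‖₁ ∈ [0,∞]` on the span of `{h_J : J ∈ τ(D)}`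
with the dyadic `H¹` norm: the map determined by `h_{τ(I)}/|τ(I)| ↦ h_I/|I|`,
i.e. sending `g = ∑_{I ∈ L} a_I h_{τ(I)}` to `∑_{I ∈ L} (|τ(I)|/|I|) a_I h_I`. -/
def h1InvOpNorm (τ : DyadicI → DyadicI) : ℝ≥0∞ :=
  ⨆ (L : Finset DyadicI) (a : DyadicI → ℝ)
    (_ : HpNormS 1 (L.image τ) (fun J => ∑ I ∈ L, if τ I = J then a I else 0) ≤ 1),
    ENNReal.ofReal (HpNormS 1 L fun I => (len (τ I) / len I) * a I)

/-- The Rademacher average `(E_ε ‖∑_{i<n} ε_i a_i‖^p)^{1/p}` over all choices of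
signs `ε_i ∈ {±1}`. -/
def radAvg (p : ℝ) {Y : Type*} [NormedAddCommGroup Y] [NormedSpace ℝ Y] (n : ℕ)
    (a : Fin n → Y) : ℝ :=
  ((∑ ε : Fin n → Bool, ‖∑ i, (if ε i then (1 : ℝ) else -1) • a i‖ ^ p) / 2 ^ n) ^ (1 / p)

/-- The type-`p` constant `Type_p(Y) ∈ [0,∞]`: the least `C` such that
`(E_ε ‖∑ ε_i a_i‖^p)^{1/p} ≤ C (∑ ‖a_i‖^p)^{1/p}` for all finite families in `Y`. -/
def typeConst (p : ℝ) (Y : Type*) [NormedAddCommGroup Y] [NormedSpace ℝ Y] : ℝ≥0∞ :=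
  sInf {C : ℝ≥0∞ | ∀ (n : ℕ) (a : Fin n → Y),
    ENNReal.ofReal (radAvg p n a) ≤ C * ENNReal.ofReal ((∑ i, ‖a i‖ ^ p) ^ (1 / p))}

/-- The UMD property of a Banach space `E`: for each `1 < r < ∞` the Haar system is
unconditional in `L^r_E`. -/
def IsUMD (E : Type*) [NormedAddCommGroup E] [NormedSpace ℝ E] : Prop :=
  ∀ r : ℝ, 1 < r → ∃ β : ℝ, ∀ (s : Finset DyadicI) (x : DyadicI → E) (ε : DyadicI → ℝ),
    (∀ I, ε I = 1 ∨ ε I = -1) →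
    LpNormV r s (fun I => ε I • x I) ≤ β * LpNormV r s x

/-- `B` is a block in `L` with top `I`: `B ⊆ L`, `I` is the unique maximal interval
of `B`, and `B` is order-convex in `L` between its elements and `I`. -/
def IsBlock (L : Set DyadicI) (B : Set DyadicI) (I : DyadicI) : Prop :=
  B ⊆ L ∧ I ∈ B ∧ (∀ J ∈ B, toSet J ⊆ toSet I) ∧
    ∀ J ∈ B, ∀ K ∈ L, toSet J ⊆ toSet K → toSet K ⊆ toSet I → K ∈ B

/-- `G₁(K | E)`: the maximal dyadic intervals of `E` strictly contained in `K`. -/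
def gen1 (K : DyadicI) (E : Set DyadicI) : Set DyadicI :=
  {J | J ∈ E ∧ toSet J ⊂ toSet K ∧
    ∀ J' ∈ E, toSet J' ⊂ toSet K → toSet J ⊆ toSet J' → J' = J}

end Defs

section Aux

open DyadicI

namespace DyadicI

lemma len_pos (I : DyadicI) : 0 < I.len := zpow_pos (by norm_num) _

lemma len_ne_zero (I : DyadicI) : I.len ≠ 0 := (len_pos I).ne'

lemma lep_nonneg (I : DyadicI) : 0 ≤ I.lep := mul_nonneg (Nat.cast_nonneg _) (len_pos I).le

lemma right_le_one (I : DyadicI) : I.lep + I.len ≤ 1 := by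
  have h1 : ((I.k : ℝ) + 1) ≤ (2 : ℝ) ^ (I.n : ℤ) := by
    have : (I.k : ℝ) + 1 ≤ ((2 : ℕ) ^ I.n : ℕ) := by
      exact_mod_cast Nat.succ_le_of_lt I.hk
    simpa [zpow_natCast] using this
  have h2 : (2 : ℝ) ^ (I.n : ℤ) * I.len = 1 := by
    rw [DyadicI.len, ← zpow_add₀ (by norm_num : (2:ℝ) ≠ 0)]
    simp
  calc I.lep + I.len = ((I.k : ℝ) + 1) * I.len := by rw [DyadicI.lep]; ring
    _ ≤ (2 : ℝ) ^ (I.n : ℤ) * I.len := by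
        exact mul_le_mul_of_nonneg_right h1 (len_pos I).le
    _ = 1 := h2

lemma toSet_subset_Ico (I : DyadicI) : toSet I ⊆ Set.Ico (0:ℝ) 1 := by
  intro t ht
  rcases ht with ⟨h1, h2⟩
  exact ⟨le_trans (lep_nonneg I) h1, lt_of_lt_of_le h2 (right_le_one I)⟩

lemma toSet_subset_Icc (I : DyadicI) : toSet I ⊆ Set.Icc (0:ℝ) 1 :=
  fun t ht => ⟨(toSet_subset_Ico I ht).1, (toSet_subset_Ico I ht).2.le⟩

lemma measurableSet_toSet (I : DyadicI) : MeasurableSet (toSet I) := measurableSet_Ico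

lemma volume_toSet (I : DyadicI) : volume (toSet I) = ENNReal.ofReal I.len := by
  rw [toSet, Real.volume_Ico]
  congr 1
  ring

lemma lep_mem_toSet (I : DyadicI) : I.lep ∈ toSet I :=
  ⟨le_refl _, by linarith [len_pos I]⟩

lemma len_le_of_subset {I J : DyadicI} (h : toSet I ⊆ toSet J) : I.len ≤ J.len := by
  have := measure_mono (μ := volume) h
  rw [volume_toSet, volume_toSet] at this
  exact (ENNReal.ofReal_le_ofReal_iff (len_pos J).le).mp this

lemma toSet_eq_of_subset_of_len_le {I J : DyadicI} (h : toSet I ⊆ toSet J)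
    (hl : J.len ≤ I.len) : toSet I = toSet J := by
  have h2 := (Set.Ico_subset_Ico_iff (by linarith [len_pos I] : I.lep < I.lep + I.len)).mp h
  have hll : I.len = J.len := le_antisymm (len_le_of_subset h) hl
  have : I.lep = J.lep := by
    rcases h2 with ⟨hA, hB⟩
    nlinarith [len_pos I]
  rw [toSet, toSet, this, hll]

lemma eq_of_toSet_eq {I J : DyadicI} (h : toSet I = toSet J) : I = J := by
  have h2 := (Set.Ico_eq_Ico_iff (Or.inl (by linarith [len_pos I] : I.lep < I.lep + I.len))).mp h
  obtain ⟨ha, hb⟩ := h2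
  have hlen : I.len = J.len := by linarith
  have hn : I.n = J.n := by
    have : (-(I.n:ℤ)) = (-(J.n:ℤ)) := by
      have := hlen
      rw [DyadicI.len, DyadicI.len] at this
      exact zpow_right_injective₀ (by norm_num) (by norm_num) this
    omega
  have hk : I.k = J.k := by
    have : (I.k : ℝ) * I.len = (J.k : ℝ) * J.len := ha
    rw [← hlen] at this
    have := mul_right_cancel₀ (len_ne_zero I) this
    exact_mod_cast this
  cases I; cases J; simp_all

end DyadicI

end Aux

namespace DyadicI

lemma toSet_subset_of_n_le {I J : DyadicI} (hn : I.n ≤ J.n) {t : ℝ}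
    (htI : t ∈ toSet I) (htJ : t ∈ toSet J) : toSet J ⊆ toSet I := by
  set d : ℕ := J.n - I.n with hd
  have hdn : J.n = I.n + d := by omega
  have hlen : I.len = (2:ℝ) ^ d * J.len := by
    rw [DyadicI.len, DyadicI.len, hdn]
    rw [← zpow_natCast (2:ℝ) d, ← zpow_add₀ (by norm_num : (2:ℝ) ≠ 0)]
    congr 1
    push_cast
    ring
  set a : ℕ := I.k * 2 ^ d with ha
  have hlepI : I.lep = (a : ℝ) * J.len := by
    rw [DyadicI.lep, hlen, ha]
    push_cast
    ring
  have hrightI : I.lep + I.len = ((a : ℝ) + 2 ^ d) * J.len := by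
    rw [hlepI, hlen]; ring
  have hJpos := len_pos J
  -- t ∈ I : a * lenJ ≤ t < (a + 2^d) * lenJ
  -- t ∈ J : J.k * lenJ ≤ t < (J.k+1) * lenJ
  obtain ⟨hI1, hI2⟩ := htI
  obtain ⟨hJ1, hJ2⟩ := htJ
  rw [hlepI] at hI1
  rw [hrightI] at hI2
  have hJ1' : (J.k : ℝ) * J.len ≤ t := hJ1
  have hJ2' : t < ((J.k : ℝ) + 1) * J.len := by
    rw [DyadicI.lep] at hJ2; linarith [hJ2]
  -- J.k < a + 2^d
  have h1 : (J.k : ℝ) < (a : ℝ) + 2 ^ d := by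
    have : (J.k : ℝ) * J.len < ((a : ℝ) + 2 ^ d) * J.len := lt_of_le_of_lt hJ1' hI2
    exact lt_of_mul_lt_mul_right this hJpos.le
  -- a < J.k + 1
  have h2 : (a : ℝ) < (J.k : ℝ) + 1 := by
    have : (a : ℝ) * J.len < ((J.k : ℝ) + 1) * J.len := lt_of_le_of_lt hI1 hJ2'
    exact lt_of_mul_lt_mul_right this hJpos.le
  have h1n : J.k + 1 ≤ a + 2 ^ d := by
    have : (J.k : ℝ) < ((a + 2 ^ d : ℕ) : ℝ) := by push_cast; linarith
    have := Nat.cast_lt.mp this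
    omega
  have h2n : a ≤ J.k := by
    have : (a : ℝ) < ((J.k + 1 : ℕ) : ℝ) := by push_cast; linarith
    have := Nat.cast_lt.mp this
    omega
  intro x hx
  obtain ⟨hx1, hx2⟩ := hx
  constructor
  · rw [hlepI]
    calc (a : ℝ) * J.len ≤ (J.k : ℝ) * J.len := by
          exact mul_le_mul_of_nonneg_right (by exact_mod_cast h2n) hJpos.le
      _ ≤ x := hx1
  · rw [hrightI]
    calc x < J.lep + J.len := hx2
      _ = ((J.k : ℝ) + 1) * J.len := by rw [DyadicI.lep]; ring
      _ ≤ ((a : ℝ) + 2 ^ d) * J.len := by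
          have : ((J.k + 1 : ℕ) : ℝ) ≤ ((a + 2 ^ d : ℕ) : ℝ) := by exact_mod_cast h1n
          push_cast at this
          exact mul_le_mul_of_nonneg_right (by linarith) hJpos.le

lemma subset_or_subset_of_mem {I J : DyadicI} {t : ℝ}
    (htI : t ∈ toSet I) (htJ : t ∈ toSet J) : toSet I ⊆ toSet J ∨ toSet J ⊆ toSet I := by
  rcases le_total I.n J.n with h | h
  · exact Or.inr (toSet_subset_of_n_le h htI htJ)
  · exact Or.inl (toSet_subset_of_n_le h htJ htI)

instance : Countable DyadicI := by
  have : Function.Injective (fun I : DyadicI => (I.n, I.k)) := by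
    intro I J h
    simp only [Prod.mk.injEq] at h
    cases I; cases J; simp_all
  exact Function.Injective.countable this

end DyadicI

namespace Stmt5

open DyadicI MeasureTheory

/-- indicator of a dyadic interval, ℝ≥0∞-valued -/
def ind (I : DyadicI) (t : ℝ) : ℝ≥0∞ := Set.indicator (toSet I) (fun _ => 1) t

lemma ofReal_indicator_mul (c : ℝ) (hc : 0 ≤ c) (I : DyadicI) (t : ℝ) :
    ENNReal.ofReal (c * Set.indicator (toSet I) (fun _ => (1:ℝ)) t)
      = ENNReal.ofReal c * ind I t := by
  by_cases h : t ∈ toSet I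
  · simp [ind, Set.indicator_of_mem h]
  · simp [ind, Set.indicator_of_notMem h]

lemma ind_le_one (I : DyadicI) (t : ℝ) : ind I t ≤ 1 := by
  by_cases h : t ∈ toSet I
  · simp [ind, Set.indicator_of_mem h]
  · simp [ind, Set.indicator_of_notMem h]

lemma measurable_ind (I : DyadicI) : Measurable (ind I) :=
  Measurable.indicator measurable_const (measurableSet_toSet I)

lemma lintegral_ind (I : DyadicI) : ∫⁻ t, ind I t = ENNReal.ofReal I.len := by
  simp only [ind]
  rw [lintegral_indicator (measurableSet_toSet I)]
  simp [volume_toSet]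

/-- The square of the square function, ℝ≥0∞-valued. -/
def sq (s : Finset DyadicI) (a : DyadicI → ℝ) (t : ℝ) : ℝ≥0∞ :=
  ∑ I ∈ s, ENNReal.ofReal (a I ^ 2) * ind I t

lemma measurable_sq (s : Finset DyadicI) (a : DyadicI → ℝ) : Measurable (sq s a) :=
  Finset.measurable_sum _ fun I _ => (measurable_ind I).const_mul _

lemma ofReal_sqFnS (s : Finset DyadicI) (a : DyadicI → ℝ) (t : ℝ) :
    ENNReal.ofReal (sqFnS s a t) = (sq s a t) ^ (1/2 : ℝ) := by
  rw [sqFnS, Real.sqrt_eq_rpow]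
  have hnn : ∀ I ∈ s, 0 ≤ a I ^ 2 * Set.indicator (toSet I) (fun _ => (1:ℝ)) t :=
    fun I _ => mul_nonneg (sq_nonneg _) (Set.indicator_nonneg (fun _ _ => zero_le_one) t)
  rw [← ENNReal.ofReal_rpow_of_nonneg (Finset.sum_nonneg hnn) (by norm_num : (0:ℝ) ≤ 1/2)]
  congr 1
  rw [ENNReal.ofReal_sum_of_nonneg hnn]
  exact Finset.sum_congr rfl fun I _ => ofReal_indicator_mul _ (sq_nonneg _) I t

lemma sqFnS_nonneg (s : Finset DyadicI) (a : DyadicI → ℝ) (t : ℝ) : 0 ≤ sqFnS s a t :=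
  Real.sqrt_nonneg _

lemma measurable_sqFnS (s : Finset DyadicI) (a : DyadicI → ℝ) : Measurable (sqFnS s a) := by
  apply Measurable.sqrt
  exact Finset.measurable_sum _ fun I _ =>
    (Measurable.indicator measurable_const (measurableSet_toSet I)).const_mul _

lemma sqFnS_le_bound (s : Finset DyadicI) (a : DyadicI → ℝ) (t : ℝ) :
    sqFnS s a t ≤ Real.sqrt (∑ I ∈ s, a I ^ 2) := by
  apply Real.sqrt_le_sqrt
  apply Finset.sum_le_sum
  intro I _
  by_cases h : t ∈ toSet I
  · simp [Set.indicator_of_mem h]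
  · simp [Set.indicator_of_notMem h, sq_nonneg]

lemma lintegral_sqFnS_lt_top (s : Finset DyadicI) (a : DyadicI → ℝ) :
    ∫⁻ t in Set.Icc (0:ℝ) 1, ENNReal.ofReal (sqFnS s a t) < ⊤ := by
  calc ∫⁻ t in Set.Icc (0:ℝ) 1, ENNReal.ofReal (sqFnS s a t)
      ≤ ∫⁻ _ in Set.Icc (0:ℝ) 1, ENNReal.ofReal (Real.sqrt (∑ I ∈ s, a I ^ 2)) := by
        exact lintegral_mono fun t => ENNReal.ofReal_le_ofReal (sqFnS_le_bound s a t)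
    _ = ENNReal.ofReal (Real.sqrt (∑ I ∈ s, a I ^ 2)) * volume (Set.Icc (0:ℝ) 1) :=
        setLIntegral_const _ _
    _ < ⊤ := ENNReal.mul_lt_top ENNReal.ofReal_lt_top (by simp [Real.volume_Icc])

lemma integral_sqFnS_eq (s : Finset DyadicI) (a : DyadicI → ℝ) :
    ∫ t in Set.Icc (0:ℝ) 1, sqFnS s a t
      = (∫⁻ t in Set.Icc (0:ℝ) 1, ENNReal.ofReal (sqFnS s a t)).toReal := by
  rw [integral_eq_lintegral_of_nonneg_ae]
  · exact Filter.Eventually.of_forall fun t => sqFnS_nonneg s a t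
  · exact (measurable_sqFnS s a).aestronglyMeasurable

lemma HpNormS_one (s : Finset DyadicI) (a : DyadicI → ℝ) :
    HpNormS 1 s a = (∫⁻ t in Set.Icc (0:ℝ) 1, ENNReal.ofReal (sqFnS s a t)).toReal := by
  rw [HpNormS]
  norm_num
  exact integral_sqFnS_eq s a

lemma lintegral_le_one_of_HpNormS (s : Finset DyadicI) (a : DyadicI → ℝ)
    (h : HpNormS 1 s a ≤ 1) :
    ∫⁻ t in Set.Icc (0:ℝ) 1, ENNReal.ofReal (sqFnS s a t) ≤ 1 := by
  rw [HpNormS_one] at h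
  have hfin := (lintegral_sqFnS_lt_top s a).ne
  calc ∫⁻ t in Set.Icc (0:ℝ) 1, ENNReal.ofReal (sqFnS s a t)
      = ENNReal.ofReal ((∫⁻ t in Set.Icc (0:ℝ) 1, ENNReal.ofReal (sqFnS s a t)).toReal) :=
        (ENNReal.ofReal_toReal hfin).symm
    _ ≤ ENNReal.ofReal 1 := ENNReal.ofReal_le_ofReal h
    _ = 1 := ENNReal.ofReal_one

lemma ofReal_HpNormS_le (s : Finset DyadicI) (a : DyadicI → ℝ) :
    ENNReal.ofReal (HpNormS 1 s a)
      ≤ ∫⁻ t in Set.Icc (0:ℝ) 1, ENNReal.ofReal (sqFnS s a t) := by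
  rw [HpNormS_one]
  exact ENNReal.ofReal_toReal_le

end Stmt5

namespace Stmt5

open DyadicI MeasureTheory

lemma lintegral_Icc_of_support (f : ℝ → ℝ≥0∞)
    (hf : ∀ t, t ∉ Set.Icc (0:ℝ) 1 → f t = 0) :
    ∫⁻ t in Set.Icc (0:ℝ) 1, f t = ∫⁻ t, f t := by
  rw [← lintegral_indicator measurableSet_Icc]
  congr 1
  funext t
  by_cases h : t ∈ Set.Icc (0:ℝ) 1
  · simp [Set.indicator_of_mem h]
  · simp [Set.indicator_of_notMem h, hf t h]

lemma sqFnS_zero_outside (s : Finset DyadicI) (a : DyadicI → ℝ) (t : ℝ)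
    (ht : t ∉ Set.Icc (0:ℝ) 1) : sqFnS s a t = 0 := by
  rw [sqFnS]
  have : ∀ I ∈ s, a I ^ 2 * Set.indicator (toSet I) (fun _ => (1:ℝ)) t = 0 := by
    intro I _
    have : t ∉ toSet I := fun h => ht (toSet_subset_Icc I h)
    simp [Set.indicator_of_notMem this]
  rw [Finset.sum_congr rfl this]
  simp

lemma ind_zero_outside (I : DyadicI) (t : ℝ) (ht : t ∉ Set.Icc (0:ℝ) 1) : ind I t = 0 := by
  have : t ∉ toSet I := fun h => ht (toSet_subset_Icc I h)
  simp [ind, Set.indicator_of_notMem this]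

lemma sum_zpow_le_of_le : ∀ (n : ℕ) (K' : Finset ℤ) (b : ℤ), K'.card ≤ n →
    (∀ k ∈ K', k ≤ b) → ∑ k ∈ K', (2:ℝ) ^ k ≤ 2 ^ (b + 1) := by
  intro n
  induction n with
  | zero =>
    intro K' b h1 _
    have : K' = ∅ := Finset.card_eq_zero.mp (Nat.le_antisymm h1 (Nat.zero_le _))
    subst this
    simp
    positivity
  | succ n ih =>
    intro K' b hc hb
    rcases K'.eq_empty_or_nonempty with rfl | hne
    · simp; positivity
    · set m := K'.max' hne with hm
      have hmK : m ∈ K' := K'.max'_mem hne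
      have hsum : ∑ k ∈ K'.erase m, (2:ℝ) ^ k + (2:ℝ) ^ m = ∑ k ∈ K', (2:ℝ) ^ k :=
        Finset.sum_erase_add _ _ hmK
      have hcard : (K'.erase m).card ≤ n := by
        have := Finset.card_erase_of_mem hmK
        omega
      have hle : ∀ k ∈ K'.erase m, k ≤ m - 1 := by
        intro k hk
        have h1 := K'.le_max' k (Finset.mem_of_mem_erase hk)
        have h2 := Finset.ne_of_mem_erase hk
        omega
      have hIH := ih (K'.erase m) (m - 1) hcard hle
      have hmb : m ≤ b := hb m hmK
      have e1 : ((m : ℤ) - 1 + 1) = m := by ring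
      rw [e1] at hIH
      have h2m : (2:ℝ) ^ (m + 1) ≤ 2 ^ (b + 1) :=
        zpow_le_zpow_right₀ (by norm_num) (by omega)
      have : ∑ k ∈ K', (2:ℝ) ^ k ≤ 2 ^ m + 2 ^ m := by
        rw [← hsum]; linarith
      calc ∑ k ∈ K', (2:ℝ) ^ k ≤ 2 ^ m + 2 ^ m := this
        _ = 2 ^ (m + 1) := by
            rw [zpow_add₀ (by norm_num : (2:ℝ) ≠ 0)]; ring
        _ ≤ 2 ^ (b + 1) := h2m

lemma sum_zpow_lt (K' : Finset ℤ) (v : ℝ) (hv : 0 ≤ v)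
    (h : ∀ k ∈ K', (2:ℝ) ^ k < v) : ∑ k ∈ K', (2:ℝ) ^ k ≤ 2 * v := by
  rcases K'.eq_empty_or_nonempty with rfl | hne
  · simp; linarith
  · set m := K'.max' hne with hm
    have hmK : m ∈ K' := K'.max'_mem hne
    have hmb : (2:ℝ) ^ m < v := h m hmK
    have := sum_zpow_le_of_le K'.card K' m (le_refl _) (fun k hk => K'.le_max' k hk)
    calc ∑ k ∈ K', (2:ℝ) ^ k ≤ 2 ^ (m + 1) := this
      _ = 2 * 2 ^ m := by rw [zpow_add₀ (by norm_num : (2:ℝ) ≠ 0)]; ring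
      _ ≤ 2 * v := by linarith

end Stmt5

namespace Stmt5

open DyadicI MeasureTheory

/-- level set of the square function -/
def Om (s : Finset DyadicI) (a : DyadicI → ℝ) (k : ℤ) : Set ℝ :=
  {t | (2:ℝ) ^ k < sqFnS s a t}

/-- stopping predicate: `|I ∩ Ω_k| > |I|/2` -/
def P (s : Finset DyadicI) (a : DyadicI → ℝ) (I : DyadicI) (k : ℤ) : Prop :=
  ENNReal.ofReal I.len < 2 * volume (toSet I ∩ Om s a k)

lemma measurableSet_Om (s : Finset DyadicI) (a : DyadicI → ℝ) (k : ℤ) :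
    MeasurableSet (Om s a k) :=
  measurableSet_lt measurable_const (measurable_sqFnS s a)

lemma Om_antitone (s : Finset DyadicI) (a : DyadicI → ℝ) {k k' : ℤ} (h : k ≤ k') :
    Om s a k' ⊆ Om s a k := by
  intro t ht
  have : (2:ℝ) ^ k ≤ (2:ℝ) ^ k' := zpow_le_zpow_right₀ (by norm_num) h
  exact lt_of_le_of_lt this ht

lemma Om_subset_Icc (s : Finset DyadicI) (a : DyadicI → ℝ) (k : ℤ) :
    Om s a k ⊆ Set.Icc (0:ℝ) 1 := by
  intro t ht
  by_contra h
  have h0 := sqFnS_zero_outside s a t h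
  have : (0:ℝ) < (2:ℝ) ^ k := zpow_pos (by norm_num) _
  have := ht
  rw [Om, Set.mem_setOf_eq, h0] at this
  linarith

lemma volume_Om_lt_top (s : Finset DyadicI) (a : DyadicI → ℝ) (k : ℤ) :
    volume (Om s a k) < ⊤ :=
  lt_of_le_of_lt (measure_mono (Om_subset_Icc s a k)) (by simp [Real.volume_Icc])

lemma exists_stop (s : Finset DyadicI) (a : DyadicI → ℝ) :
    ∃ g : DyadicI → ℤ, ∀ I ∈ s, a I ≠ 0 →
      (P s a I (g I) ∧ ∀ k, P s a I k → k ≤ g I) := by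
  have key : ∀ I : DyadicI, ∃ m : ℤ, (I ∈ s ∧ a I ≠ 0) →
      (P s a I m ∧ ∀ k, P s a I k → k ≤ m) := by
    intro I
    by_cases hI : I ∈ s ∧ a I ≠ 0
    · obtain ⟨hIs, haI⟩ := hI
      -- bounded above
      obtain ⟨N, hN⟩ := pow_unbounded_of_one_lt (Real.sqrt (∑ J ∈ s, a J ^ 2))
        (by norm_num : (1:ℝ) < 2)
      have hbdd : ∀ k : ℤ, P s a I k → k ≤ N := by
        intro k hk
        by_contra hlt
        push_neg at hlt
        have hOm : Om s a k = ∅ := by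
          ext t
          simp only [Om, Set.mem_setOf_eq, Set.mem_empty_iff_false, iff_false, not_lt]
          calc sqFnS s a t ≤ Real.sqrt (∑ J ∈ s, a J ^ 2) := sqFnS_le_bound s a t
            _ ≤ (2:ℝ) ^ (N:ℤ) := by
                rw [zpow_natCast]; exact hN.le
            _ ≤ (2:ℝ) ^ k := zpow_le_zpow_right₀ (by norm_num) (by omega)
        rw [P, hOm] at hk
        simp [Set.inter_empty] at hk
      -- nonempty
      have hne : ∃ k : ℤ, P s a I k := by
        obtain ⟨n, hn⟩ := pow_unbounded_of_one_lt (1 / |a I|) (by norm_num : (1:ℝ) < 2)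
        refine ⟨-(n:ℤ), ?_⟩
        have habs : 0 < |a I| := abs_pos.mpr haI
        have hsmall : (2:ℝ) ^ (-(n:ℤ)) < |a I| := by
          rw [zpow_neg, zpow_natCast, inv_eq_one_div,
            div_lt_iff₀ (by positivity : (0:ℝ) < (2:ℝ) ^ n)]
          rw [div_lt_iff₀ habs] at hn
          rw [mul_comm]
          exact hn
        have hsub : toSet I ⊆ Om s a (-(n:ℤ)) := by
          intro t ht
          have h1 : a I ^ 2 * Set.indicator (toSet I) (fun _ => (1:ℝ)) t = a I ^ 2 := by
            rw [Set.indicator_of_mem ht]; ring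
          have h2 : a I ^ 2 ≤ ∑ J ∈ s, a J ^ 2 * Set.indicator (toSet J) (fun _ => (1:ℝ)) t := by
            rw [← h1]
            apply Finset.single_le_sum (f := fun J => a J ^ 2 * Set.indicator (toSet J) (fun _ => (1:ℝ)) t)
              (fun J _ => mul_nonneg (sq_nonneg _) (Set.indicator_nonneg (fun _ _ => zero_le_one) t)) hIs
          have h3 : |a I| ≤ sqFnS s a t := by
            rw [sqFnS]
            calc |a I| = Real.sqrt (a I ^ 2) := (Real.sqrt_sq_eq_abs _).symm
              _ ≤ _ := Real.sqrt_le_sqrt h2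
          exact lt_of_lt_of_le hsmall h3
        rw [P]
        have : toSet I ∩ Om s a (-(n:ℤ)) = toSet I := Set.inter_eq_left.mpr hsub
        rw [this, volume_toSet]
        have hpos : (0:ℝ≥0∞) < ENNReal.ofReal I.len := ENNReal.ofReal_pos.mpr (len_pos I)
        calc ENNReal.ofReal I.len < ENNReal.ofReal I.len + ENNReal.ofReal I.len :=
              ENNReal.lt_add_right (ENNReal.ofReal_lt_top).ne hpos.ne'
          _ = 2 * ENNReal.ofReal I.len := (two_mul _).symm
      obtain ⟨m, hm1, hm2⟩ := Int.exists_greatest_of_bdd ⟨N, hbdd⟩ hne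
      exact ⟨m, fun _ => ⟨hm1, hm2⟩⟩
    · exact ⟨0, fun h => absurd h hI⟩
  choose g hg using key
  exact ⟨g, fun I hIs haI => hg I ⟨hIs, haI⟩⟩

end Stmt5

namespace Stmt5

open DyadicI MeasureTheory

lemma sq_eq_ofReal_sq (s : Finset DyadicI) (a : DyadicI → ℝ) (t : ℝ) :
    sq s a t = ENNReal.ofReal (sqFnS s a t ^ 2) := by
  have hnn : ∀ I ∈ s, 0 ≤ a I ^ 2 * Set.indicator (toSet I) (fun _ => (1:ℝ)) t :=
    fun I _ => mul_nonneg (sq_nonneg _) (Set.indicator_nonneg (fun _ _ => zero_le_one) t)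
  rw [sqFnS, Real.sq_sqrt (Finset.sum_nonneg hnn), ENNReal.ofReal_sum_of_nonneg hnn]
  exact (Finset.sum_congr rfl fun I _ => (ofReal_indicator_mul _ (sq_nonneg _) I t).symm)

lemma lintegral_ind_measure (I : DyadicI) (μ : Measure ℝ) :
    ∫⁻ t, ind I t ∂μ = μ (toSet I) := by
  simp only [ind]
  rw [lintegral_indicator (measurableSet_toSet I)]
  simp

lemma measurableSet_unionA (A : Finset DyadicI) :
    MeasurableSet (⋃ I ∈ (A : Set DyadicI), toSet I) :=
  MeasurableSet.biUnion A.countable_toSet (fun I _ => measurableSet_toSet I)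

/-- Block L² estimate. -/
lemma block_L2 (s : Finset DyadicI) (a : DyadicI → ℝ) (k : ℤ) (A : Finset DyadicI)
    (hAs : A ⊆ s) (hnn : ∀ I ∈ A, ¬ P s a I (k + 1)) :
    ∑ I ∈ A, ENNReal.ofReal (a I ^ 2) * ENNReal.ofReal I.len
      ≤ 2 * ENNReal.ofReal (((2:ℝ) ^ (k+1)) ^ 2) * volume (⋃ I ∈ (A : Set DyadicI), toSet I) := by
  set W := Om s a (k + 1) with hW
  have hWm : MeasurableSet W := measurableSet_Om s a (k + 1)
  set E := ⋃ I ∈ (A : Set DyadicI), toSet I with hE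
  have hhalf : ∀ I ∈ A, ENNReal.ofReal I.len ≤ 2 * volume (toSet I ∩ Wᶜ) := by
    intro I hI
    have h1 : ¬ P s a I (k+1) := hnn I hI
    rw [P] at h1
    push_neg at h1
    have hsplit : volume (toSet I ∩ W) + volume (toSet I ∩ Wᶜ) = volume (toSet I) := by
      simpa [Set.diff_eq] using (measure_inter_add_diff (toSet I) hWm)
    have hfin : volume (toSet I ∩ W) ≠ ⊤ := by
      refine (lt_of_le_of_lt (measure_mono Set.inter_subset_left) ?_).ne
      rw [volume_toSet]; exact ENNReal.ofReal_lt_top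
    rw [volume_toSet] at hsplit
    have h2 : volume (toSet I ∩ W) ≤ volume (toSet I ∩ Wᶜ) := by
      have h3 := h1
      rw [← hsplit, two_mul] at h3
      exact (ENNReal.add_le_add_iff_left hfin).mp h3
    calc ENNReal.ofReal I.len = volume (toSet I ∩ W) + volume (toSet I ∩ Wᶜ) := hsplit.symm
      _ ≤ volume (toSet I ∩ Wᶜ) + volume (toSet I ∩ Wᶜ) := by gcongr
      _ = 2 * volume (toSet I ∩ Wᶜ) := (two_mul _).symm
  have step1 : ∑ I ∈ A, ENNReal.ofReal (a I ^ 2) * ENNReal.ofReal I.len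
      ≤ 2 * ∑ I ∈ A, ENNReal.ofReal (a I ^ 2) * volume (toSet I ∩ Wᶜ) := by
    rw [Finset.mul_sum]
    apply Finset.sum_le_sum
    intro I hI
    calc ENNReal.ofReal (a I ^ 2) * ENNReal.ofReal I.len
        ≤ ENNReal.ofReal (a I ^ 2) * (2 * volume (toSet I ∩ Wᶜ)) :=
          mul_le_mul_right (hhalf I hI) _
      _ = 2 * (ENNReal.ofReal (a I ^ 2) * volume (toSet I ∩ Wᶜ)) := by ring
  have step2 : ∑ I ∈ A, ENNReal.ofReal (a I ^ 2) * volume (toSet I ∩ Wᶜ)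
      = ∫⁻ t in Wᶜ, sq A a t := by
    simp only [sq]
    rw [lintegral_finset_sum _ (fun I _ => (measurable_ind I).const_mul _)]
    apply Finset.sum_congr rfl
    intro I _
    rw [lintegral_const_mul _ (measurable_ind I), lintegral_ind_measure,
      Measure.restrict_apply (measurableSet_toSet I)]
  have step3 : ∫⁻ t in Wᶜ, sq A a t
      ≤ ∫⁻ t in Wᶜ, ENNReal.ofReal (((2:ℝ) ^ (k+1)) ^ 2) * Set.indicator E (fun _ => 1) t := by
    apply setLIntegral_mono' hWm.compl
    intro t ht
    by_cases htE : t ∈ E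
    · rw [Set.indicator_of_mem htE, mul_one]
      calc sq A a t ≤ sq s a t := Finset.sum_le_sum_of_subset hAs
        _ = ENNReal.ofReal (sqFnS s a t ^ 2) := sq_eq_ofReal_sq s a t
        _ ≤ ENNReal.ofReal (((2:ℝ) ^ (k+1)) ^ 2) := by
            apply ENNReal.ofReal_le_ofReal
            have hle : sqFnS s a t ≤ (2:ℝ) ^ (k+1) := by
              have := ht
              rw [Set.mem_compl_iff, hW, Om, Set.mem_setOf_eq, not_lt] at this
              exact this
            have := sqFnS_nonneg s a t
            nlinarith
    · rw [Set.indicator_of_notMem htE, mul_zero]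
      have : sq A a t = 0 := by
        apply Finset.sum_eq_zero
        intro I hI
        have : t ∉ toSet I := by
          intro h
          exact htE (Set.mem_biUnion hI h)
        simp [ind, Set.indicator_of_notMem this]
      rw [this]
  have step4 : ∫⁻ t in Wᶜ, ENNReal.ofReal (((2:ℝ) ^ (k+1)) ^ 2) * Set.indicator E (fun _ => 1) t
      ≤ ENNReal.ofReal (((2:ℝ) ^ (k+1)) ^ 2) * volume E := by
    rw [lintegral_const_mul _ (Measurable.indicator measurable_const (measurableSet_unionA A))]
    apply mul_le_mul_right
    rw [lintegral_indicator (measurableSet_unionA A)]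
    simp only [lintegral_one, Measure.restrict_restrict (measurableSet_unionA A),
      Measure.restrict_apply_univ]
    exact measure_mono Set.inter_subset_left
  calc ∑ I ∈ A, ENNReal.ofReal (a I ^ 2) * ENNReal.ofReal I.len
      ≤ 2 * ∑ I ∈ A, ENNReal.ofReal (a I ^ 2) * volume (toSet I ∩ Wᶜ) := step1
    _ = 2 * ∫⁻ t in Wᶜ, sq A a t := by rw [step2]
    _ ≤ 2 * (ENNReal.ofReal (((2:ℝ) ^ (k+1)) ^ 2) * volume E) := by
        exact mul_le_mul_right (le_trans step3 step4) _
    _ = 2 * ENNReal.ofReal (((2:ℝ) ^ (k+1)) ^ 2) * volume E := by ring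

/-- Covering lemma: if every interval in `A` has more than half its mass in `W`,
then the union of `A` has measure at most `2 |W|`. -/
lemma covering (A : Finset DyadicI) (W : Set ℝ) (hW : MeasurableSet W)
    (hP : ∀ I ∈ A, ENNReal.ofReal I.len < 2 * volume (toSet I ∩ W)) :
    volume (⋃ I ∈ (A : Set DyadicI), toSet I) ≤ 2 * volume W := by
  set M := A.filter (fun I => ∀ J ∈ A, toSet I ⊆ toSet J → toSet J = toSet I) with hM
  have hmax : ∀ I ∈ A, ∃ J ∈ M, toSet I ⊆ toSet J := by
    intro I hI
    set F := A.filter (fun J => toSet I ⊆ toSet J) with hF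
    have hIF : I ∈ F := Finset.mem_filter.mpr ⟨hI, subset_refl _⟩
    obtain ⟨J, hJF, hJmax⟩ := F.exists_max_image DyadicI.len ⟨I, hIF⟩
    obtain ⟨hJA, hIJ⟩ := Finset.mem_filter.mp hJF
    refine ⟨J, ?_, hIJ⟩
    rw [hM, Finset.mem_filter]
    refine ⟨hJA, ?_⟩
    intro J' hJ'A hsub
    have hJ'F : J' ∈ F := Finset.mem_filter.mpr ⟨hJ'A, hIJ.trans hsub⟩
    exact (toSet_eq_of_subset_of_len_le hsub (hJmax J' hJ'F)).symm
  have hdisj : (M : Set DyadicI).PairwiseDisjoint (fun I => toSet I ∩ W) := by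
    intro I hI J hJ hIJ
    have hIM := Finset.mem_filter.mp hI
    have hJM := Finset.mem_filter.mp hJ
    have hd : Disjoint (toSet I) (toSet J) := by
      by_contra hnd
      obtain ⟨t, htI, htJ⟩ := Set.not_disjoint_iff.mp hnd
      rcases subset_or_subset_of_mem htI htJ with h | h
      · exact hIJ (eq_of_toSet_eq (hIM.2 J hJM.1 h)).symm
      · exact hIJ (eq_of_toSet_eq (hJM.2 I hIM.1 h))
    exact Disjoint.mono Set.inter_subset_left Set.inter_subset_left hd
  have hcover : (⋃ I ∈ (A : Set DyadicI), toSet I) ⊆ ⋃ J ∈ (M : Set DyadicI), toSet J := by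
    intro t ht
    obtain ⟨I, hI, htI⟩ := Set.mem_iUnion₂.mp ht
    obtain ⟨J, hJ, hsub⟩ := hmax I hI
    exact Set.mem_iUnion₂.mpr ⟨J, hJ, hsub htI⟩
  calc volume (⋃ I ∈ (A : Set DyadicI), toSet I)
      ≤ volume (⋃ J ∈ (M : Set DyadicI), toSet J) := measure_mono hcover
    _ = volume (⋃ J ∈ M, toSet J) := by rw [Finset.set_biUnion_coe]
    _ ≤ ∑ J ∈ M, volume (toSet J) := measure_biUnion_finset_le M _
    _ = ∑ J ∈ M, ENNReal.ofReal J.len := by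
        exact Finset.sum_congr rfl fun J _ => volume_toSet J
    _ ≤ ∑ J ∈ M, 2 * volume (toSet J ∩ W) := by
        apply Finset.sum_le_sum
        intro J hJ
        exact (hP J (Finset.mem_filter.mp hJ).1).le
    _ = 2 * ∑ J ∈ M, volume (toSet J ∩ W) := by rw [Finset.mul_sum]
    _ = 2 * volume (⋃ J ∈ M, toSet J ∩ W) := by
        rw [measure_biUnion_finset hdisj
          (fun J _ => (measurableSet_toSet J).inter hW)]
    _ ≤ 2 * volume W := by
        apply mul_le_mul_right
        apply measure_mono
        exact Set.iUnion₂_subset fun J _ => Set.inter_subset_right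

end Stmt5

namespace Stmt5

open DyadicI MeasureTheory

/-- rearranged coefficient -/
def cco (τ : DyadicI → DyadicI) (a : DyadicI → ℝ) (I : DyadicI) : ℝ :=
  (I.len / (τ I).len) * a I

lemma rearrCoefS_apply (τ : DyadicI → DyadicI) (hτ : Function.Injective τ)
    (s : Finset DyadicI) (a : DyadicI → ℝ) {I : DyadicI} (hI : I ∈ s) :
    rearrCoefS τ 1 s a (τ I) = cco τ a I := by
  rw [rearrCoefS]
  rw [Finset.sum_eq_single I]
  · simp only [if_pos rfl, cco]
    norm_num
  · intro I' hI' hne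
    rw [if_neg (fun h => hne (hτ h))]
  · intro h
    exact absurd hI h

lemma sq_image (τ : DyadicI → DyadicI) (hτ : Function.Injective τ)
    (s : Finset DyadicI) (a : DyadicI → ℝ) (t : ℝ) :
    sq (s.image τ) (rearrCoefS τ 1 s a) t
      = ∑ I ∈ s, ENNReal.ofReal ((cco τ a I) ^ 2) * ind (τ I) t := by
  rw [sq, Finset.sum_image (fun x _ y _ h => hτ h)]
  apply Finset.sum_congr rfl
  intro I hI
  rw [rearrCoefS_apply τ hτ s a hI]

lemma rpow_sum_le {ι : Type*} (F : Finset ι) (f : ι → ℝ≥0∞) :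
    (∑ i ∈ F, f i) ^ (1/2:ℝ) ≤ ∑ i ∈ F, (f i) ^ (1/2:ℝ) := by
  induction F using Finset.cons_induction with
  | empty => simp [ENNReal.zero_rpow_of_pos (by norm_num : (0:ℝ) < 1/2)]
  | cons i F hi ih =>
    rw [Finset.sum_cons, Finset.sum_cons]
    calc (f i + ∑ j ∈ F, f j) ^ (1/2:ℝ)
        ≤ (f i) ^ (1/2:ℝ) + (∑ j ∈ F, f j) ^ (1/2:ℝ) :=
          ENNReal.rpow_add_le_add_rpow _ _ (by norm_num) (by norm_num)
      _ ≤ _ := add_le_add_right ih _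

lemma measurable_muSet (τ : DyadicI → DyadicI) (L : Set DyadicI) :
    Measurable (muSet τ L) := by
  apply Measurable.iSup
  intro I
  by_cases hI : I ∈ L
  · simp only [iSup_pos hI]
    exact (Measurable.const_mul (measurable_const.indicator (measurableSet_toSet (τ I))) _).ennreal_ofReal
  · simp only [iSup_neg hI]
    exact measurable_const

lemma muSet_zero_outside (τ : DyadicI → DyadicI) (L : Set DyadicI) (t : ℝ)
    (ht : t ∉ Set.Icc (0:ℝ) 1) : muSet τ L t = 0 := by
  rw [muSet]
  refine le_antisymm ?_ zero_le
  refine iSup₂_le fun I hI => ?_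
  have : t ∉ toSet (τ I) := fun h => ht (toSet_subset_Icc (τ I) h)
  simp [Set.indicator_of_notMem this]

lemma le_muSet (τ : DyadicI → DyadicI) (L : Set DyadicI) {I : DyadicI} (hI : I ∈ L)
    {t : ℝ} (ht : t ∈ toSet (τ I)) :
    ENNReal.ofReal (I.len / (τ I).len) ≤ muSet τ L t := by
  rw [muSet]
  have h1 : ENNReal.ofReal (I.len / (τ I).len)
      = ENNReal.ofReal (I.len / (τ I).len * Set.indicator (toSet (τ I)) (fun _ => (1:ℝ)) t) := by
    rw [Set.indicator_of_mem ht, mul_one]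
  rw [h1]
  exact le_iSup₂ (f := fun (I : DyadicI) (_ : I ∈ L) =>
    ENNReal.ofReal (I.len / (τ I).len * Set.indicator (toSet (τ I)) (fun _ => (1:ℝ)) t)) I hI

lemma measurable_R (τ : DyadicI → DyadicI) (a : DyadicI → ℝ) (A : Finset DyadicI) :
    Measurable (fun t => ∑ I ∈ A, ENNReal.ofReal (I.len / (τ I).len * a I ^ 2) * ind (τ I) t) :=
  Finset.measurable_sum _ fun I _ => (measurable_ind (τ I)).const_mul _

lemma lintegral_R (τ : DyadicI → DyadicI) (a : DyadicI → ℝ) (A : Finset DyadicI) :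
    ∫⁻ t, ∑ I ∈ A, ENNReal.ofReal (I.len / (τ I).len * a I ^ 2) * ind (τ I) t
      = ∑ I ∈ A, ENNReal.ofReal (a I ^ 2 * I.len) := by
  rw [lintegral_finset_sum _ (fun I _ => (measurable_ind (τ I)).const_mul _)]
  apply Finset.sum_congr rfl
  intro I _
  rw [lintegral_const_mul _ (measurable_ind (τ I)), lintegral_ind]
  rw [← ENNReal.ofReal_mul
    (mul_nonneg (div_nonneg (len_pos I).le (len_pos (τ I)).le) (sq_nonneg _))]
  congr 1
  field_simp [len_ne_zero (τ I)]

/-- Hölder / Cauchy-Schwarz block estimate. -/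
lemma holder_block (τ : DyadicI → DyadicI) (a : DyadicI → ℝ) (A : Finset DyadicI) :
    ∫⁻ t, (∑ I ∈ A, ENNReal.ofReal ((cco τ a I) ^ 2) * ind (τ I) t) ^ (1/2:ℝ)
      ≤ (∫⁻ t, muSet τ (A : Set DyadicI) t) ^ (1/2:ℝ)
        * (∑ I ∈ A, ENNReal.ofReal (a I ^ 2 * I.len)) ^ (1/2:ℝ) := by
  set R := fun t => ∑ I ∈ A, ENNReal.ofReal (I.len / (τ I).len * a I ^ 2) * ind (τ I) t with hR
  have hQR : ∀ t, (∑ I ∈ A, ENNReal.ofReal ((cco τ a I) ^ 2) * ind (τ I) t)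
      ≤ muSet τ (A : Set DyadicI) t * R t := by
    intro t
    rw [hR, Finset.mul_sum]
    apply Finset.sum_le_sum
    intro I hI
    by_cases ht : t ∈ toSet (τ I)
    · have hind : ind (τ I) t = 1 := by simp [ind, Set.indicator_of_mem ht]
      rw [hind, mul_one]
      have hsplit : ENNReal.ofReal ((cco τ a I) ^ 2)
          = ENNReal.ofReal (I.len / (τ I).len) * ENNReal.ofReal (I.len / (τ I).len * a I ^ 2) := by
        rw [← ENNReal.ofReal_mul (div_nonneg (len_pos I).le (len_pos (τ I)).le)]
        congr 1
        rw [cco]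
        ring
      rw [hsplit, mul_one]
      exact mul_le_mul_left (le_muSet τ (A : Set DyadicI) hI ht) _
    · have hind : ind (τ I) t = 0 := by simp [ind, Set.indicator_of_notMem ht]
      rw [hind, mul_zero, mul_zero]
      exact zero_le
  have hmono : ∫⁻ t, (∑ I ∈ A, ENNReal.ofReal ((cco τ a I) ^ 2) * ind (τ I) t) ^ (1/2:ℝ)
      ≤ ∫⁻ t, (muSet τ (A : Set DyadicI) t) ^ (1/2:ℝ) * (R t) ^ (1/2:ℝ) := by
    apply lintegral_mono
    intro t
    calc (∑ I ∈ A, ENNReal.ofReal ((cco τ a I) ^ 2) * ind (τ I) t) ^ (1/2:ℝ)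
        ≤ (muSet τ (A : Set DyadicI) t * R t) ^ (1/2:ℝ) := by
          exact ENNReal.rpow_le_rpow (hQR t) (by norm_num)
      _ = (muSet τ (A : Set DyadicI) t) ^ (1/2:ℝ) * (R t) ^ (1/2:ℝ) :=
          ENNReal.mul_rpow_of_nonneg _ _ (by norm_num)
  have hconj : Real.HolderConjugate 2 2 := by
    rw [Real.holderConjugate_iff]; constructor
    · norm_num
    · norm_num
  have hholder := ENNReal.lintegral_mul_le_Lp_mul_Lq volume hconj
    ((measurable_muSet τ (A : Set DyadicI)).pow_const (1/2:ℝ)).aemeasurable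
    ((measurable_R τ a A).pow_const (1/2:ℝ)).aemeasurable
  have hsimp : ∀ (f : ℝ → ℝ≥0∞), (fun t => (f t ^ (1/2:ℝ)) ^ (2:ℝ)) = f := by
    intro f
    funext t
    rw [← ENNReal.rpow_mul]
    norm_num
  rw [hsimp (fun t => muSet τ (A : Set DyadicI) t), hsimp R] at hholder
  calc ∫⁻ t, (∑ I ∈ A, ENNReal.ofReal ((cco τ a I) ^ 2) * ind (τ I) t) ^ (1/2:ℝ)
      ≤ ∫⁻ t, (muSet τ (A : Set DyadicI) t) ^ (1/2:ℝ) * (R t) ^ (1/2:ℝ) := hmono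
    _ ≤ (∫⁻ t, muSet τ (A : Set DyadicI) t) ^ (1/(2:ℝ))
        * (∫⁻ t, R t) ^ (1/(2:ℝ)) := hholder
    _ = (∫⁻ t, muSet τ (A : Set DyadicI) t) ^ (1/2:ℝ)
        * (∑ I ∈ A, ENNReal.ofReal (a I ^ 2 * I.len)) ^ (1/2:ℝ) := by
        rw [lintegral_R]

/-- Cone bound for a finite nonempty block. -/
lemma cone_bound (τ : DyadicI → DyadicI) (A : Finset DyadicI) (hA : A.Nonempty) :
    ∫⁻ t, muSet τ (A : Set DyadicI) t
      ≤ Cone τ * volume (⋃ I ∈ (A : Set DyadicI), toSet I) := by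
  obtain ⟨I₀, hI₀⟩ := hA
  have hI₀' : I₀ ∈ (A : Set DyadicI) := hI₀
  have hVeq : pointSet (A : Set DyadicI) = ⋃ I ∈ (A : Set DyadicI), toSet I := rfl
  have hV0 : volume (pointSet (A : Set DyadicI)) ≠ 0 := by
    intro h
    have h1 : volume (toSet I₀) ≤ volume (pointSet (A : Set DyadicI)) := by
      rw [hVeq]
      exact measure_mono (Set.subset_biUnion_of_mem hI₀')
    rw [volume_toSet, h] at h1
    exact (ENNReal.ofReal_pos.mpr (len_pos I₀)).ne' (le_antisymm h1 zero_le)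
  have hV1 : volume (pointSet (A : Set DyadicI)) ≠ ⊤ := by
    rw [hVeq]
    have hsub : (⋃ I ∈ (A : Set DyadicI), toSet I) ⊆ Set.Icc (0:ℝ) 1 :=
      Set.iUnion₂_subset fun I _ => toSet_subset_Icc I
    have := measure_mono (μ := volume) hsub
    refine (lt_of_le_of_lt this ?_).ne
    simp [Real.volume_Icc]
  have hCone : (∫⁻ t in Set.Icc (0:ℝ) 1, muSet τ (A : Set DyadicI) t)
      / volume (pointSet (A : Set DyadicI)) ≤ Cone τ := by
    rw [Cone]
    exact le_iSup₂ (f := fun (L : Set DyadicI) (_ : L.Nonempty) =>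
      (∫⁻ t in Set.Icc (0:ℝ) 1, muSet τ L t) / volume (pointSet L))
      (A : Set DyadicI) ⟨I₀, hI₀'⟩
  rw [ENNReal.div_le_iff hV0 hV1] at hCone
  calc ∫⁻ t, muSet τ (A : Set DyadicI) t
      = ∫⁻ t in Set.Icc (0:ℝ) 1, muSet τ (A : Set DyadicI) t :=
        (lintegral_Icc_of_support _ (muSet_zero_outside τ _)).symm
    _ ≤ Cone τ * volume (pointSet (A : Set DyadicI)) := hCone
    _ = Cone τ * volume (⋃ I ∈ (A : Set DyadicI), toSet I) := by rw [hVeq]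

end Stmt5

namespace Stmt5

open DyadicI MeasureTheory

lemma ofReal_sq_rpow_half (x : ℝ) (hx : 0 ≤ x) :
    (ENNReal.ofReal (x ^ 2)) ^ (1/2:ℝ) = ENNReal.ofReal x := by
  have h1 : x ^ 2 = x ^ (2:ℝ) := by
    rw [← Real.rpow_natCast x 2]
    norm_num
  rw [h1, ← ENNReal.ofReal_rpow_of_nonneg hx (by norm_num : (0:ℝ) ≤ 2)]
  rw [← ENNReal.rpow_mul]
  norm_num

/-- distribution function estimate -/
lemma dist_sum (s : Finset DyadicI) (a : DyadicI → ℝ) (K : Finset ℤ) :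
    ∑ k ∈ K, ENNReal.ofReal ((2:ℝ) ^ (k+1)) * volume (Om s a k)
      ≤ 4 * ∫⁻ t, ENNReal.ofReal (sqFnS s a t) := by
  have hrw : ∀ k ∈ K, ENNReal.ofReal ((2:ℝ) ^ (k+1)) * volume (Om s a k)
      = ∫⁻ t, ENNReal.ofReal ((2:ℝ) ^ (k+1)) * Set.indicator (Om s a k) (fun _ => 1) t := by
    intro k _
    rw [lintegral_const_mul _ (Measurable.indicator measurable_const (measurableSet_Om s a k))]
    congr 1
    rw [lintegral_indicator (measurableSet_Om s a k)]
    simp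
  rw [Finset.sum_congr rfl hrw]
  rw [← lintegral_finset_sum _ (fun k _ =>
    (Measurable.indicator measurable_const (measurableSet_Om s a k)).const_mul _)]
  have hpt : ∀ t, ∑ k ∈ K, ENNReal.ofReal ((2:ℝ) ^ (k+1)) * Set.indicator (Om s a k) (fun _ => 1) t
      ≤ ENNReal.ofReal (4 * sqFnS s a t) := by
    intro t
    have h1 : ∀ k ∈ K, ENNReal.ofReal ((2:ℝ) ^ (k+1)) * Set.indicator (Om s a k) (fun _ => 1) t
        = if t ∈ Om s a k then ENNReal.ofReal ((2:ℝ) ^ (k+1)) else 0 := by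
      intro k _
      by_cases h : t ∈ Om s a k
      · simp [Set.indicator_of_mem h, h]
      · simp [Set.indicator_of_notMem h, h]
    rw [Finset.sum_congr rfl h1, ← Finset.sum_filter]
    set F := K.filter (fun k => t ∈ Om s a k) with hF
    rw [← ENNReal.ofReal_sum_of_nonneg (fun k _ => by positivity)]
    apply ENNReal.ofReal_le_ofReal
    have hflt : ∀ k ∈ F, (2:ℝ) ^ k < sqFnS s a t := by
      intro k hk
      have := (Finset.mem_filter.mp hk).2
      exact this
    have hsum : ∑ k ∈ F, (2:ℝ) ^ (k+1) = 2 * ∑ k ∈ F, (2:ℝ) ^ k := by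
      rw [Finset.mul_sum]
      apply Finset.sum_congr rfl
      intro k _
      rw [zpow_add₀ (by norm_num : (2:ℝ) ≠ 0)]
      ring
    rw [hsum]
    have := sum_zpow_lt F (sqFnS s a t) (sqFnS_nonneg s a t) hflt
    linarith
  calc ∫⁻ t, ∑ k ∈ K, ENNReal.ofReal ((2:ℝ) ^ (k+1)) * Set.indicator (Om s a k) (fun _ => 1) t
      ≤ ∫⁻ t, ENNReal.ofReal (4 * sqFnS s a t) := lintegral_mono hpt
    _ = 4 * ∫⁻ t, ENNReal.ofReal (sqFnS s a t) := by
        have : ∀ t, ENNReal.ofReal (4 * sqFnS s a t)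
            = 4 * ENNReal.ofReal (sqFnS s a t) := by
          intro t
          rw [ENNReal.ofReal_mul (by norm_num : (0:ℝ) ≤ 4)]
          norm_num
        rw [funext this]
        rw [lintegral_const_mul _ (measurable_sqFnS s a).ennreal_ofReal]

/-- Main estimate, for coefficients supported on `s` with no zero values. -/
lemma key (τ : DyadicI → DyadicI) (hτ : Function.Injective τ)
    (s : Finset DyadicI) (a : DyadicI → ℝ) (ha : ∀ I ∈ s, a I ≠ 0)
    (h1 : ∫⁻ t, ENNReal.ofReal (sqFnS s a t) ≤ 1) :
    ∫⁻ t, (sq (s.image τ) (rearrCoefS τ 1 s a) t) ^ (1/2:ℝ)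
      ≤ (Cone τ) ^ (1/2:ℝ) * (2:ℝ≥0∞) ^ (1/2:ℝ) * 8 := by
  obtain ⟨g, hg⟩ := exists_stop s a
  set K := s.image g with hK
  set A : ℤ → Finset DyadicI := fun k => s.filter (fun I => g I = k) with hA
  have fact1 : ∀ k, ∀ I ∈ A k, P s a I k := by
    intro k I hI
    obtain ⟨hIs, hgI⟩ := Finset.mem_filter.mp hI
    have := (hg I hIs (ha I hIs)).1
    rwa [hgI] at this
  have fact2 : ∀ k, ∀ I ∈ A k, ¬ P s a I (k+1) := by
    intro k I hI hP
    obtain ⟨hIs, hgI⟩ := Finset.mem_filter.mp hI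
    have := (hg I hIs (ha I hIs)).2 (k+1) hP
    omega
  have factne : ∀ k ∈ K, (A k).Nonempty := by
    intro k hk
    obtain ⟨I, hIs, hgI⟩ := Finset.mem_image.mp hk
    exact ⟨I, Finset.mem_filter.mpr ⟨hIs, hgI⟩⟩
  set Qf : ℤ → ℝ → ℝ≥0∞ := fun k t => ∑ I ∈ A k, ENNReal.ofReal ((cco τ a I) ^ 2) * ind (τ I) t
    with hQf
  have hQmeas : ∀ k, Measurable (Qf k) := fun k =>
    Finset.measurable_sum _ fun I _ => (measurable_ind (τ I)).const_mul _
  -- decomposition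
  have hdecomp : ∀ t, sq (s.image τ) (rearrCoefS τ 1 s a) t = ∑ k ∈ K, Qf k t := by
    intro t
    rw [sq_image τ hτ s a t, hQf, hK, hA]
    exact (Finset.sum_fiberwise_of_maps_to (fun I hI => Finset.mem_image_of_mem g hI) _).symm
  -- per block estimate
  have perk : ∀ k ∈ K, ∫⁻ t, (Qf k t) ^ (1/2:ℝ)
      ≤ (Cone τ) ^ (1/2:ℝ) * (2:ℝ≥0∞) ^ (1/2:ℝ)
        * (ENNReal.ofReal ((2:ℝ) ^ (k+1)) * (2 * volume (Om s a k))) := by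
    intro k hk
    set V := volume (⋃ I ∈ ((A k) : Set DyadicI), toSet I) with hV
    have hstep1 := holder_block τ a (A k)
    have hstep2 := cone_bound τ (A k) (factne k hk)
    have hsum_eq : ∑ I ∈ A k, ENNReal.ofReal (a I ^ 2 * I.len)
        = ∑ I ∈ A k, ENNReal.ofReal (a I ^ 2) * ENNReal.ofReal I.len :=
      Finset.sum_congr rfl fun I _ => ENNReal.ofReal_mul (sq_nonneg _)
    have hstep3 := block_L2 s a k (A k) (Finset.filter_subset _ s) (fact2 k)
    have hstep4 := covering (A k) (Om s a k) (measurableSet_Om s a k) (fact1 k)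
    have hhalf : (0:ℝ) ≤ 1/2 := by norm_num
    have hC2 : (ENNReal.ofReal (((2:ℝ) ^ (k+1)) ^ 2)) ^ (1/2:ℝ)
        = ENNReal.ofReal ((2:ℝ) ^ (k+1)) :=
      ofReal_sq_rpow_half _ (by positivity)
    calc ∫⁻ t, (Qf k t) ^ (1/2:ℝ)
        ≤ (∫⁻ t, muSet τ ((A k) : Set DyadicI) t) ^ (1/2:ℝ)
          * (∑ I ∈ A k, ENNReal.ofReal (a I ^ 2 * I.len)) ^ (1/2:ℝ) := hstep1
      _ ≤ (Cone τ * V) ^ (1/2:ℝ)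
          * (2 * ENNReal.ofReal (((2:ℝ) ^ (k+1)) ^ 2) * V) ^ (1/2:ℝ) := by
          apply mul_le_mul'
          · exact ENNReal.rpow_le_rpow hstep2 hhalf
          · apply ENNReal.rpow_le_rpow _ hhalf
            rw [hsum_eq]
            exact hstep3
      _ = (Cone τ) ^ (1/2:ℝ) * (2:ℝ≥0∞) ^ (1/2:ℝ)
          * (ENNReal.ofReal (((2:ℝ) ^ (k+1)) ^ 2)) ^ (1/2:ℝ) * (V ^ (1/2:ℝ) * V ^ (1/2:ℝ)) := by
          rw [ENNReal.mul_rpow_of_nonneg _ _ hhalf, ENNReal.mul_rpow_of_nonneg _ _ hhalf,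
            ENNReal.mul_rpow_of_nonneg _ _ hhalf]
          ring
      _ = (Cone τ) ^ (1/2:ℝ) * (2:ℝ≥0∞) ^ (1/2:ℝ)
          * (ENNReal.ofReal ((2:ℝ) ^ (k+1))) * V := by
          rw [hC2, ← ENNReal.rpow_add_of_nonneg _ _ hhalf hhalf]
          norm_num
      _ ≤ (Cone τ) ^ (1/2:ℝ) * (2:ℝ≥0∞) ^ (1/2:ℝ)
          * (ENNReal.ofReal ((2:ℝ) ^ (k+1))) * (2 * volume (Om s a k)) := by
          exact mul_le_mul_right hstep4 _
      _ = (Cone τ) ^ (1/2:ℝ) * (2:ℝ≥0∞) ^ (1/2:ℝ)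
          * (ENNReal.ofReal ((2:ℝ) ^ (k+1)) * (2 * volume (Om s a k))) := by ring
  -- assemble
  calc ∫⁻ t, (sq (s.image τ) (rearrCoefS τ 1 s a) t) ^ (1/2:ℝ)
      = ∫⁻ t, (∑ k ∈ K, Qf k t) ^ (1/2:ℝ) := by
        congr 1
        funext t
        rw [hdecomp t]
    _ ≤ ∫⁻ t, ∑ k ∈ K, (Qf k t) ^ (1/2:ℝ) := lintegral_mono fun t => rpow_sum_le K _
    _ = ∑ k ∈ K, ∫⁻ t, (Qf k t) ^ (1/2:ℝ) :=
        lintegral_finset_sum _ (fun k _ => (hQmeas k).pow_const _)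
    _ ≤ ∑ k ∈ K, (Cone τ) ^ (1/2:ℝ) * (2:ℝ≥0∞) ^ (1/2:ℝ)
        * (ENNReal.ofReal ((2:ℝ) ^ (k+1)) * (2 * volume (Om s a k))) :=
        Finset.sum_le_sum perk
    _ = (Cone τ) ^ (1/2:ℝ) * (2:ℝ≥0∞) ^ (1/2:ℝ)
        * (2 * ∑ k ∈ K, ENNReal.ofReal ((2:ℝ) ^ (k+1)) * volume (Om s a k)) := by
        simp only [Finset.mul_sum]
        apply Finset.sum_congr rfl
        intro k _
        ring
    _ ≤ (Cone τ) ^ (1/2:ℝ) * (2:ℝ≥0∞) ^ (1/2:ℝ)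
        * (2 * (4 * ∫⁻ t, ENNReal.ofReal (sqFnS s a t))) := by
        exact mul_le_mul_right (mul_le_mul_right (dist_sum s a K) _) _
    _ ≤ (Cone τ) ^ (1/2:ℝ) * (2:ℝ≥0∞) ^ (1/2:ℝ) * (2 * (4 * 1)) := by
        exact mul_le_mul_right (mul_le_mul_right (mul_le_mul_right h1 _) _) _
    _ = (Cone τ) ^ (1/2:ℝ) * (2:ℝ≥0∞) ^ (1/2:ℝ) * 8 := by norm_num

end Stmt5

namespace Stmt5

open DyadicI MeasureTheory

lemma sqFnS_filter (s : Finset DyadicI) (a : DyadicI → ℝ) (t : ℝ) :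
    sqFnS (s.filter (fun I => a I ≠ 0)) a t = sqFnS s a t := by
  rw [sqFnS, sqFnS]
  congr 1
  apply Finset.sum_filter_of_ne
  intro I _ hne h0
  exact hne (by rw [h0]; ring)

lemma sq_switch (τ : DyadicI → DyadicI) (hτ : Function.Injective τ)
    (s : Finset DyadicI) (a : DyadicI → ℝ) (t : ℝ) :
    sq (s.image τ) (rearrCoefS τ 1 s a) t
      = sq ((s.filter (fun I => a I ≠ 0)).image τ)
          (rearrCoefS τ 1 (s.filter (fun I => a I ≠ 0)) a) t := by
  rw [sq_image τ hτ s a t, sq_image τ hτ (s.filter (fun I => a I ≠ 0)) a t]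
  symm
  apply Finset.sum_filter_of_ne
  intro I _ hne h0
  apply hne
  have : cco τ a I = 0 := by rw [cco, h0, mul_zero]
  rw [this]
  simp

lemma const_le : (2:ℝ≥0∞) ^ (1/2:ℝ) * 8 ≤ (ENNReal.ofReal 128) ^ (1/2:ℝ) := by
  have h2 : (2:ℝ≥0∞) = ENNReal.ofReal 2 := by simp
  have h8 : (8:ℝ≥0∞) = ENNReal.ofReal 8 := by simp
  rw [h2, h8, ENNReal.ofReal_rpow_of_nonneg (by norm_num) (by norm_num),
    ENNReal.ofReal_rpow_of_nonneg (by norm_num) (by norm_num),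
    ← ENNReal.ofReal_mul (by positivity)]
  apply ENNReal.ofReal_le_ofReal
  rw [← Real.sqrt_eq_rpow, ← Real.sqrt_eq_rpow]
  have h128 : (128:ℝ) = (Real.sqrt 2 * 8) ^ 2 := by
    rw [mul_pow, Real.sq_sqrt (by norm_num : (0:ℝ) ≤ 2)]
    norm_num
  rw [h128, Real.sqrt_sq (by positivity)]

theorem statement5' :
    ∀ (τ : DyadicI → DyadicI), Function.Injective τ →
      hpOpNormS τ 1 ^ 2 ≤ ENNReal.ofReal 128 * Cone τ := by
  intro τ hτ
  have hbound : hpOpNormS τ 1 ≤ (ENNReal.ofReal 128 * Cone τ) ^ (1/2:ℝ) := by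
    rw [hpOpNormS]
    apply iSup_le; intro s; apply iSup_le; intro a; apply iSup_le; intro hle
    set s' := s.filter (fun I => a I ≠ 0) with hs'
    have ha' : ∀ I ∈ s', a I ≠ 0 := fun I hI => (Finset.mem_filter.mp hI).2
    have h1 : ∫⁻ t, ENNReal.ofReal (sqFnS s' a t) ≤ 1 := by
      have hG := lintegral_le_one_of_HpNormS s a hle
      rw [lintegral_Icc_of_support _
        (fun t ht => by rw [sqFnS_zero_outside s a t ht]; simp)] at hG
      calc ∫⁻ t, ENNReal.ofReal (sqFnS s' a t)
          = ∫⁻ t, ENNReal.ofReal (sqFnS s a t) := by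
            congr 1
            funext t
            rw [hs', sqFnS_filter s a t]
        _ ≤ 1 := hG
    have hkey := key τ hτ s' a ha' h1
    calc ENNReal.ofReal (HpNormS 1 (s.image τ) (rearrCoefS τ 1 s a))
        ≤ ∫⁻ t in Set.Icc (0:ℝ) 1,
            ENNReal.ofReal (sqFnS (s.image τ) (rearrCoefS τ 1 s a) t) := ofReal_HpNormS_le _ _
      _ = ∫⁻ t, ENNReal.ofReal (sqFnS (s.image τ) (rearrCoefS τ 1 s a) t) :=
          lintegral_Icc_of_support _
            (fun t ht => by rw [sqFnS_zero_outside _ _ t ht]; simp)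
      _ = ∫⁻ t, (sq (s'.image τ) (rearrCoefS τ 1 s' a) t) ^ (1/2:ℝ) := by
          congr 1
          funext t
          rw [ofReal_sqFnS, sq_switch τ hτ s a t]
      _ ≤ (Cone τ) ^ (1/2:ℝ) * (2:ℝ≥0∞) ^ (1/2:ℝ) * 8 := hkey
      _ ≤ (ENNReal.ofReal 128 * Cone τ) ^ (1/2:ℝ) := by
          rw [ENNReal.mul_rpow_of_nonneg _ _ (by norm_num : (0:ℝ) ≤ 1/2)]
          calc (Cone τ) ^ (1/2:ℝ) * (2:ℝ≥0∞) ^ (1/2:ℝ) * 8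
              = (Cone τ) ^ (1/2:ℝ) * ((2:ℝ≥0∞) ^ (1/2:ℝ) * 8) := by ring
            _ ≤ (Cone τ) ^ (1/2:ℝ) * (ENNReal.ofReal 128) ^ (1/2:ℝ) :=
                mul_le_mul_right const_le _
            _ = (ENNReal.ofReal 128) ^ (1/2:ℝ) * (Cone τ) ^ (1/2:ℝ) := by ring
  have hY2 : (ENNReal.ofReal 128 * Cone τ) ^ (1/2:ℝ) * (ENNReal.ofReal 128 * Cone τ) ^ (1/2:ℝ)
      = ENNReal.ofReal 128 * Cone τ := by
    rw [← ENNReal.rpow_add_of_nonneg _ _ (by norm_num : (0:ℝ) ≤ 1/2) (by norm_num : (0:ℝ) ≤ 1/2)]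
    norm_num
  calc hpOpNormS τ 1 ^ 2 = hpOpNormS τ 1 * hpOpNormS τ 1 := by ring
    _ ≤ (ENNReal.ofReal 128 * Cone τ) ^ (1/2:ℝ) * (ENNReal.ofReal 128 * Cone τ) ^ (1/2:ℝ) :=
        mul_le_mul' hbound hbound
    _ = ENNReal.ofReal 128 * Cone τ := hY2

end Stmt5

/-- There is an absolute constant `A₁ > 0` such that for every
injective `τ : D → D`, the scalar rearrangement operator on dyadic `H¹` satisfies
`‖T_{τ,1}‖₁² ≤ A₁ · C₁`. -/
theorem statement5 :
    ∃ A₁ : ℝ, 0 < A₁ ∧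
      ∀ (τ : DyadicI → DyadicI), Function.Injective τ →
        hpOpNormS τ 1 ^ 2 ≤ ENNReal.ofReal A₁ * Cone τ :=
  ⟨128, by norm_num, Stmt5.statement5'⟩
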